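/- arXiv:2107.14675 — 2 statements merged into one kernel-verified Lean document; each statement's English description precedes it below -/
import Mathlib

section
/- Let G^[Σ] be a labelled Gröbner basis of I^[Σ] and suppose some g^[γ] ∈ G^[Σ] is top s-reducible by G^[Σ] \ {g^[γ]}. Then G^[Σ] \ {g^[γ]} is still a labelled Gröbner basis of I^[Σ]. -/
open Finsupp

/-- The free algebra `K⟨X⟩`, realized as the monoid algebra of the free monoid. -/
abbrev FreeAlg (K X : Type*) [Field K] := MonoidAlgebra K (FreeMonoid X)

/-- Module monomials `a εᵢ b` of the free bimodule of rank `r`. -/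
structure MonMod (X : Type*) (r : ℕ) where
  left : FreeMonoid X
  idx : Fin r
  right : FreeMonoid X

/-- The free bimodule `Σ = (K⟨X⟩ ⊗ K⟨X⟩)^r`, realized as the span of module monomials. -/
abbrev FreeBimod (K X : Type*) [Field K] (r : ℕ) := MonMod X r →₀ K

/-- Two-sided action of a pair of words on a module monomial: `a·(c εᵢ d)·b = (ac) εᵢ (db)`. -/
def act {X : Type*} {r : ℕ} (a b : FreeMonoid X) (μ : MonMod X r) : MonMod X r :=
  ⟨a * μ.left, μ.idx, μ.right * b⟩

/-- The monomial `w` as an element of the free algebra. -/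
noncomputable def mon (K : Type*) [Field K] {X : Type*} (w : FreeMonoid X) : FreeAlg K X :=
  MonoidAlgebra.of K (FreeMonoid X) w

/-- The evaluation homomorphism `Σ → K⟨X⟩`, `εᵢ ↦ fᵢ`. -/
noncomputable def evalS {K X : Type*} [Field K] {r : ℕ} (F : Fin r → FreeAlg K X)
    (α : FreeBimod K X r) : FreeAlg K X :=
  α.sum fun μ c => c • (mon K μ.left * F μ.idx * mon K μ.right)

section Orders

variable {K X : Type*} [Field K] [LinearOrder (FreeMonoid X)] {r : ℕ}
  [LinearOrder (MonMod X r)]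

/-- The signature of a module element: the largest module monomial of its support
(`⊥` for the zero element). -/
noncomputable def sigW (α : FreeBimod K X r) : WithBot (MonMod X r) := α.support.max

/-- The leading monomial of a nonzero polynomial (junk value `1` for `0`). -/
noncomputable def lmon (p : FreeAlg K X) : FreeMonoid X :=
  if h : p.coeff.support.Nonempty then p.coeff.support.max' h else 1

/-- The leading coefficient. -/
noncomputable def lcoeff (p : FreeAlg K X) : K := p.coeff (lmon p)

/-- The leading term. -/
noncomputable def lterm (p : FreeAlg K X) : FreeAlg K X :=
  MonoidAlgebra.single (lmon p) (lcoeff p)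

/-- `f^[α]` is top s-reducible by the set `G^[Σ]`. -/
def TopSRed (G : Set (FreeAlg K X × FreeBimod K X r)) (f : FreeAlg K X)
    (α : FreeBimod K X r) : Prop :=
  ∃ g γ, (g, γ) ∈ G ∧ g ≠ 0 ∧ ∃ a b : FreeMonoid X,
    a * lmon g * b = lmon f ∧ WithBot.map (act a b) (sigW γ) ≤ sigW α

/-- `f^[α]` is singular top s-reducible by `G^[Σ]`. -/
def SingTopSRed (G : Set (FreeAlg K X × FreeBimod K X r)) (f : FreeAlg K X)
    (α : FreeBimod K X r) : Prop :=
  f ≠ 0 ∧ ∃ g γ, (g, γ) ∈ G ∧ g ≠ 0 ∧ ∃ a b : FreeMonoid X,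
    a * lmon g * b = lmon f ∧ WithBot.map (act a b) (sigW γ) = sigW α

/-- `f^[α]` admits a regular s-reduction by `G^[Σ]`. -/
def RegSRedible (G : Set (FreeAlg K X × FreeBimod K X r)) (f : FreeAlg K X)
    (α : FreeBimod K X r) : Prop :=
  ∃ g γ, (g, γ) ∈ G ∧ g ≠ 0 ∧ ∃ a b : FreeMonoid X,
    a * lmon g * b ∈ f.coeff.support ∧ WithBot.map (act a b) (sigW γ) < sigW α

/-- `f^[α]` admits a regular *top* s-reduction by `G^[Σ]`. -/
def RegTopSRedible (G : Set (FreeAlg K X × FreeBimod K X r)) (f : FreeAlg K X)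
    (α : FreeBimod K X r) : Prop :=
  f ≠ 0 ∧ ∃ g γ, (g, γ) ∈ G ∧ g ≠ 0 ∧ ∃ a b : FreeMonoid X,
    a * lmon g * b = lmon f ∧ WithBot.map (act a b) (sigW γ) < sigW α

/-- Result of one s-reduction step of `f^[α]` by `a g^[γ] b`. -/
noncomputable def sredResult (f : FreeAlg K X) (α : FreeBimod K X r)
    (g : FreeAlg K X) (γ : FreeBimod K X r) (a b : FreeMonoid X) :
    FreeAlg K X × FreeBimod K X r :=
  (f - (f.coeff (a * lmon g * b) * (lcoeff g)⁻¹) • (mon K a * g * mon K b),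
   α - (f.coeff (a * lmon g * b) * (lcoeff g)⁻¹) • Finsupp.mapDomain (act a b) γ)

/-- One s-reduction step by `G^[Σ]`. -/
def SRedStep (G : Set (FreeAlg K X × FreeBimod K X r))
    (p q : FreeAlg K X × FreeBimod K X r) : Prop :=
  ∃ g γ, (g, γ) ∈ G ∧ g ≠ 0 ∧ ∃ a b : FreeMonoid X,
    a * lmon g * b ∈ p.1.coeff.support ∧ WithBot.map (act a b) (sigW γ) ≤ sigW p.2 ∧
    q = sredResult p.1 p.2 g γ a b

/-- One *regular* s-reduction step by `G^[Σ]`. -/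
def RegSRedStep (G : Set (FreeAlg K X × FreeBimod K X r))
    (p q : FreeAlg K X × FreeBimod K X r) : Prop :=
  ∃ g γ, (g, γ) ∈ G ∧ g ≠ 0 ∧ ∃ a b : FreeMonoid X,
    a * lmon g * b ∈ p.1.coeff.support ∧ WithBot.map (act a b) (sigW γ) < sigW p.2 ∧
    q = sredResult p.1 p.2 g γ a b

/-- `p` s-reduces to zero by `G^[Σ]`. -/
def SRedToZero (G : Set (FreeAlg K X × FreeBimod K X r))
    (p : FreeAlg K X × FreeBimod K X r) : Prop :=
  ∃ σ : FreeBimod K X r, Relation.ReflTransGen (SRedStep G) p (0, σ)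

/-- `p` regular s-reduces to zero by `G^[Σ]`. -/
def RegSRedToZero (G : Set (FreeAlg K X × FreeBimod K X r))
    (p : FreeAlg K X × FreeBimod K X r) : Prop :=
  ∃ σ : FreeBimod K X r, Relation.ReflTransGen (RegSRedStep G) p (0, σ)

/-- `G^[Σ] ⊆ I^[Σ]`: labelled polynomials with nonzero polynomial part. -/
def InLab (F : Fin r → FreeAlg K X) (G : Set (FreeAlg K X × FreeBimod K X r)) : Prop :=
  ∀ p ∈ G, p.1 = evalS F p.2 ∧ p.1 ≠ 0

/-- `G^[Σ]` is a labelled Gröbner basis of `I^[Σ]`. -/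
def LabGB (F : Fin r → FreeAlg K X) (G : Set (FreeAlg K X × FreeBimod K X r)) : Prop :=
  InLab F G ∧ ∀ (f : FreeAlg K X) (α : FreeBimod K X r), f = evalS F α → SRedToZero G (f, α)

/-- `G^[Σ]` is a labelled Gröbner basis of `I^[Σ]` up to signature `σ`. -/
def LabGBUpTo (F : Fin r → FreeAlg K X) (G : Set (FreeAlg K X × FreeBimod K X r))
    (σ : MonMod X r) : Prop :=
  InLab F G ∧ ∀ (f : FreeAlg K X) (α : FreeBimod K X r), f = evalS F α →
    sigW α < (σ : WithBot (MonMod X r)) → SRedToZero G (f, α)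

/-- `G^[Σ]` is a *minimal* labelled Gröbner basis of `I^[Σ]`. -/
def MinLabGB (F : Fin r → FreeAlg K X) (G : Set (FreeAlg K X × FreeBimod K X r)) : Prop :=
  LabGB F G ∧ ∀ p ∈ G, ¬ TopSRed (G \ {p}) p.1 p.2

end Orders

section Aux

variable {K X : Type*} [Field K] {r : ℕ}

private lemma aux_inj (a b : FreeMonoid X) :
    Function.Injective (fun u : FreeMonoid X => a * u * b) := by
  intro u v h
  simp only at h
  exact mul_left_cancel (mul_right_cancel h)

private lemma mon_mul_mon (a b : FreeMonoid X) (g : FreeAlg K X) :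
    (mon K a * g * mon K b).coeff = Finsupp.mapDomain (fun u => a * u * b) g.coeff := by
  induction g using MonoidAlgebra.induction_linear with
  | zero => simp
  | add x y hx hy =>
    rw [mul_add, add_mul, MonoidAlgebra.coeff_add, hx, hy, MonoidAlgebra.coeff_add,
      Finsupp.mapDomain_add]
  | single u c =>
    simp only [mon, MonoidAlgebra.of_apply]
    rw [MonoidAlgebra.single_mul_single, MonoidAlgebra.single_mul_single, one_mul, mul_one,
      MonoidAlgebra.coeff_single, MonoidAlgebra.coeff_single, Finsupp.mapDomain_single]

private noncomputable def vMap (F : Fin r → FreeAlg K X) (μ : MonMod X r) : FreeAlg K X :=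
  mon K μ.left * F μ.idx * mon K μ.right

private lemma evalS_eq (F : Fin r → FreeAlg K X) (α : FreeBimod K X r) :
    evalS F α = Finsupp.linearCombination K (vMap F) α := by
  rw [Finsupp.linearCombination_apply]; rfl

private lemma evalS_sub_smul (F : Fin r → FreeAlg K X) (α β : FreeBimod K X r) (c : K) :
    evalS F (α - c • β) = evalS F α - c • evalS F β := by
  simp [evalS_eq, map_sub, map_smul]

private lemma evalS_mapDomain (F : Fin r → FreeAlg K X) (a b : FreeMonoid X)
    (γ : FreeBimod K X r) :
    evalS F (Finsupp.mapDomain (act a b) γ) = mon K a * evalS F γ * mon K b := by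
  rw [evalS_eq, Finsupp.linearCombination_mapDomain, evalS_eq]
  have h1 : mon K a * Finsupp.linearCombination K (vMap F) γ * mon K b
      = ((LinearMap.mulRight K (mon K b)).comp (LinearMap.mulLeft K (mon K a)))
          (Finsupp.linearCombination K (vMap F) γ) := rfl
  rw [h1, Finsupp.apply_linearCombination]
  have h2 : ∀ μ : MonMod X r, (vMap F ∘ act a b) μ =
      (⇑(LinearMap.mulRight K (mon K b) ∘ₗ LinearMap.mulLeft K (mon K a)) ∘ vMap F) μ := by
    intro μ
    simp only [Function.comp_apply, LinearMap.coe_comp, LinearMap.mulLeft_apply,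
      LinearMap.mulRight_apply, vMap, act, mon, map_mul]
    simp only [mul_assoc]
  rw [funext h2]

variable [LinearOrder (FreeMonoid X)] [LinearOrder (MonMod X r)]

private lemma lmon_mem {g : FreeAlg K X} (hg : g ≠ 0) : lmon g ∈ g.coeff.support := by
  rw [lmon, dif_pos (Finsupp.support_nonempty_iff.mpr (mt MonoidAlgebra.coeff_eq_zero.mp hg))]
  exact Finset.max'_mem _ _

private lemma le_lmon {g : FreeAlg K X} (hg : g ≠ 0) {w : FreeMonoid X}
    (hw : w ∈ g.coeff.support) : w ≤ lmon g := by
  rw [lmon, dif_pos (Finsupp.support_nonempty_iff.mpr (mt MonoidAlgebra.coeff_eq_zero.mp hg))]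
  exact Finset.le_max' _ _ hw

private lemma lcoeff_ne_zero {g : FreeAlg K X} (hg : g ≠ 0) : lcoeff g ≠ 0 :=
  Finsupp.mem_support_iff.mp (lmon_mem hg)

private lemma coeff_mon_mul (a b : FreeMonoid X) (g : FreeAlg K X) :
    (mon K a * g * mon K b).coeff (a * lmon g * b) = lcoeff g := by
  rw [mon_mul_mon]
  exact Finsupp.mapDomain_apply (aux_inj a b) g.coeff (lmon g)

private lemma support_mon_mul {a b : FreeMonoid X} {g : FreeAlg K X} {w : FreeMonoid X}
    (hw : w ∈ (mon K a * g * mon K b).coeff.support) : ∃ u ∈ g.coeff.support, w = a * u * b := by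
  classical
  rw [mon_mul_mon] at hw
  obtain ⟨u, hu, rfl⟩ := Finset.mem_image.mp (Finsupp.mapDomain_support hw)
  exact ⟨u, hu, rfl⟩

private lemma sigW_sub_smul_le {α β : FreeBimod K X r} {c : K} {t : WithBot (MonMod X r)}
    (hα : sigW α ≤ t) (hβ : sigW β ≤ t) : sigW (α - c • β) ≤ t := by
  classical
  refine Finset.max_le fun μ hμ => ?_
  rcases Finset.mem_union.mp (Finsupp.support_sub hμ) with h | h
  · exact le_trans (Finset.le_max h) hα
  · exact le_trans (Finset.le_max (Finsupp.support_smul h)) hβ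

private lemma sigW_mapDomain_le {φ : MonMod X r → MonMod X r} (hφ : Monotone φ)
    (γ : FreeBimod K X r) :
    sigW (Finsupp.mapDomain φ γ) ≤ WithBot.map φ (sigW γ) := by
  classical
  refine Finset.max_le fun ν hν => ?_
  obtain ⟨μ, hμ, rfl⟩ := Finset.mem_image.mp (Finsupp.mapDomain_support hν)
  have h1 : (μ : WithBot (MonMod X r)) ≤ sigW γ := Finset.le_max hμ
  have hne : sigW γ ≠ ⊥ := fun h => by simp [h] at h1
  obtain ⟨m, hm⟩ := WithBot.ne_bot_iff_exists.mp hne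
  rw [← hm, WithBot.map_coe, WithBot.coe_le_coe]
  exact hφ (WithBot.coe_le_coe.mp (hm ▸ h1))

private lemma wbmap_mono {A : Type*} [Preorder A] {φ : A → A} (hφ : Monotone φ) :
    Monotone (WithBot.map φ) := by
  intro x y h
  induction x using WithBot.recBotCoe with
  | bot => simp
  | coe a =>
    induction y using WithBot.recBotCoe with
    | bot => exact absurd h (WithBot.not_coe_le_bot a)
    | coe b =>
      rw [WithBot.map_coe, WithBot.map_coe, WithBot.coe_le_coe]
      exact hφ (WithBot.coe_le_coe.mp h)

private lemma wbmap_map {A : Type*} (φ ψ : A → A) (x : WithBot A) :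
    WithBot.map φ (WithBot.map ψ x) = WithBot.map (fun a => φ (ψ a)) x := by
  induction x using WithBot.recBotCoe <;> simp

private lemma act_comp (a b c d : FreeMonoid X) (μ : MonMod X r) :
    act a b (act c d μ) = act (a * c) (d * b) μ := by
  simp [act, mul_assoc]

private lemma chain_top
    (hmon : ∀ a b u v : FreeMonoid X, u ≤ v → a * u * b ≤ a * v * b)
    (hmod : ∀ (a b : FreeMonoid X) (μ ν : MonMod X r), μ ≤ ν → act a b μ ≤ act a b ν)
    (G : Set (FreeAlg K X × FreeBimod K X r)) (σ : FreeBimod K X r)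
    (lmax : FreeMonoid X) (s₀ : WithBot (MonMod X r)) :
    ∀ q : FreeAlg K X × FreeBimod K X r,
      Relation.ReflTransGen (SRedStep G) q (0, σ) →
      lmax ∈ q.1.coeff.support → (∀ w ∈ q.1.coeff.support, w ≤ lmax) → sigW q.2 ≤ s₀ →
      ∃ g γ, (g, γ) ∈ G ∧ g ≠ 0 ∧ ∃ a b : FreeMonoid X,
        a * lmon g * b = lmax ∧ WithBot.map (act a b) (sigW γ) ≤ s₀ := by
  intro q hchain
  induction hchain using Relation.ReflTransGen.head_induction_on with
  | refl => intro hmem _ _; simp at hmem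
  | @head x y hstep hrest ih =>
    intro hmem hle hsig
    obtain ⟨g, γ, hgG, hg0, a, b, habs, hsl, hq⟩ := hstep
    by_cases hm : a * lmon g * b = lmax
    · exact ⟨g, γ, hgG, hg0, a, b, hm, le_trans hsl hsig⟩
    · subst hq
      have hlt : a * lmon g * b < lmax := lt_of_le_of_ne (hle _ habs) hm
      have hz : (mon K a * g * mon K b).coeff lmax = 0 := by
        by_contra hzz
        obtain ⟨u, hu, rfl⟩ := support_mon_mul (Finsupp.mem_support_iff.mpr hzz)
        exact absurd hlt (not_lt.mpr (hmon a b u (lmon g) (le_lmon hg0 hu)))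
      have hmem' : lmax ∈ (sredResult x.1 x.2 g γ a b).1.coeff.support := by
        rw [Finsupp.mem_support_iff]
        simp only [sredResult]
        rw [MonoidAlgebra.coeff_sub, Finsupp.sub_apply, MonoidAlgebra.coeff_smul, Finsupp.smul_apply, hz, smul_zero, sub_zero]
        exact Finsupp.mem_support_iff.mp hmem
      have hle' : ∀ w ∈ (sredResult x.1 x.2 g γ a b).1.coeff.support, w ≤ lmax := by
        intro w hw
        simp only [sredResult] at hw
        rw [MonoidAlgebra.coeff_sub, MonoidAlgebra.coeff_smul] at hw
        classical
        rcases Finset.mem_union.mp (Finsupp.support_sub hw) with h | h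
        · exact hle w h
        · obtain ⟨u, hu, rfl⟩ := support_mon_mul (Finsupp.support_smul h)
          exact le_trans (hmon a b u (lmon g) (le_lmon hg0 hu)) (le_of_lt hlt)
      have hsig' : sigW (sredResult x.1 x.2 g γ a b).2 ≤ s₀ := by
        simp only [sredResult]
        exact sigW_sub_smul_le hsig
          (le_trans (le_trans (sigW_mapDomain_le (fun _ _ hh => hmod a b _ _ hh) γ) hsl) hsig)
      exact ih hmem' hle' hsig'

private lemma topSRed_transfer
    (hmod : ∀ (a b : FreeMonoid X) (μ ν : MonMod X r), μ ≤ ν → act a b μ ≤ act a b ν)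
    (G : Set (FreeAlg K X × FreeBimod K X r)) (p : FreeAlg K X × FreeBimod K X r)
    (hred : TopSRed (G \ {p}) p.1 p.2)
    {f : FreeAlg K X} {α : FreeBimod K X r} (h : TopSRed G f α) :
    TopSRed (G \ {p}) f α := by
  obtain ⟨g, γ, hgG, hg0, a, b, hab, hsig⟩ := h
  by_cases hgp : (g, γ) = p
  · obtain ⟨h', δ, hhG, hh0, c, d, hcd, hsd⟩ := hred
    refine ⟨h', δ, hhG, hh0, a * c, d * b, ?_, ?_⟩
    · have h1 : c * lmon h' * d = lmon g := by rw [hcd, ← hgp]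
      rw [← hab, ← h1]
      simp [mul_assoc]
    · have h2 : WithBot.map (act c d) (sigW δ) ≤ sigW γ := by rw [← hgp] at hsd; exact hsd
      calc WithBot.map (act (a * c) (d * b)) (sigW δ)
          = WithBot.map (act a b) (WithBot.map (act c d) (sigW δ)) := by
            rw [wbmap_map]; congr 1; funext μ; exact (act_comp a b c d μ).symm
        _ ≤ WithBot.map (act a b) (sigW γ) := wbmap_mono (fun _ _ hh => hmod a b _ _ hh) h2
        _ ≤ sigW α := hsig
  · exact ⟨g, γ, ⟨hgG, by simpa using hgp⟩, hg0, a, b, hab, hsig⟩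

private lemma topSRed_to_zero [WellFoundedLT (FreeMonoid X)]
    (hmon : ∀ a b u v : FreeMonoid X, u ≤ v → a * u * b ≤ a * v * b)
    (F : Fin r → FreeAlg K X)
    (G' : Set (FreeAlg K X × FreeBimod K X r)) (hlab : InLab F G')
    (htop : ∀ (f : FreeAlg K X) (α : FreeBimod K X r), f ≠ 0 → f = evalS F α →
      TopSRed G' f α) :
    ∀ (f : FreeAlg K X) (α : FreeBimod K X r), f = evalS F α → SRedToZero G' (f, α) := by
  suffices H : ∀ w : FreeMonoid X, ∀ f : FreeAlg K X, ∀ α : FreeBimod K X r,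
      lmon f ≤ w → f = evalS F α → SRedToZero G' (f, α) by
    exact fun f α hf => H (lmon f) f α le_rfl hf
  intro w
  refine WellFoundedLT.induction (motive := fun w => ∀ (f : FreeAlg K X) (α : FreeBimod K X r),
    lmon f ≤ w → f = evalS F α → SRedToZero G' (f, α)) w ?_
  intro w ih f α hle hf
  by_cases h0 : f = 0
  · exact ⟨α, by rw [h0]⟩
  · obtain ⟨g, γ, hgG, hg0, a, b, hab, hsig⟩ := htop f α h0 hf
    have hstep : SRedStep G' (f, α) (sredResult f α g γ a b) :=
      ⟨g, γ, hgG, hg0, a, b, by rw [hab]; exact lmon_mem h0, hsig, rfl⟩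
    have hq1 : (sredResult f α g γ a b).1 = evalS F (sredResult f α g γ a b).2 := by
      simp only [sredResult]
      have hge : g = evalS F γ := (hlab (g, γ) hgG).1
      rw [evalS_sub_smul, evalS_mapDomain, ← hf, ← hge]
    have hcoeff : (sredResult f α g γ a b).1.coeff (lmon f) = 0 := by
      simp only [sredResult]
      rw [MonoidAlgebra.coeff_sub, Finsupp.sub_apply, MonoidAlgebra.coeff_smul, Finsupp.smul_apply, smul_eq_mul, ← hab, coeff_mon_mul,
        mul_assoc (f.coeff (a * lmon g * b)), inv_mul_cancel₀ (lcoeff_ne_zero hg0), mul_one, sub_self]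
    have hbound : ∀ u ∈ (sredResult f α g γ a b).1.coeff.support, u < lmon f := by
      intro u hu
      have hne : u ≠ lmon f := fun he => Finsupp.mem_support_iff.mp hu (he ▸ hcoeff)
      refine lt_of_le_of_ne ?_ hne
      simp only [sredResult] at hu
      rw [MonoidAlgebra.coeff_sub, MonoidAlgebra.coeff_smul] at hu
      classical
      rcases Finset.mem_union.mp (Finsupp.support_sub hu) with h | h
      · exact le_lmon h0 h
      · obtain ⟨v, hv, rfl⟩ := support_mon_mul (Finsupp.support_smul h)
        rw [← hab]
        exact hmon a b v (lmon g) (le_lmon hg0 hv)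
    by_cases hz : (sredResult f α g γ a b).1 = 0
    · exact ⟨(sredResult f α g γ a b).2, by
        rw [← hz]
        exact Relation.ReflTransGen.single hstep⟩
    · have hlt : lmon (sredResult f α g γ a b).1 < lmon f := hbound _ (lmon_mem hz)
      obtain ⟨σ, hch⟩ := ih (lmon (sredResult f α g γ a b).1) (lt_of_lt_of_le hlt hle)
        (sredResult f α g γ a b).1 (sredResult f α g γ a b).2 le_rfl hq1
      exact ⟨σ, Relation.ReflTransGen.head hstep hch⟩

end Aux

/-- If `G^[Σ]` is a labelled Gröbner basis of `I^[Σ]` and some `g^[γ] ∈ G^[Σ]` is top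
s-reducible by `G^[Σ] \ {g^[γ]}`, then `G^[Σ] \ {g^[γ]}` is still a labelled Gröbner
basis of `I^[Σ]`. -/
theorem labGB_remove_topSRedible {K X : Type*} [Field K] {r : ℕ}
    [LinearOrder (FreeMonoid X)] [WellFoundedLT (FreeMonoid X)]
    [LinearOrder (MonMod X r)] [WellFoundedLT (MonMod X r)]
    (hmon : ∀ a b u v : FreeMonoid X, u ≤ v → a * u * b ≤ a * v * b)
    (hmod : ∀ (a b : FreeMonoid X) (μ ν : MonMod X r), μ ≤ ν → act a b μ ≤ act a b ν)
    (hcomp : ∀ (u v : FreeMonoid X) (i : Fin r),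
      (u ≤ v ↔ (⟨u, i, 1⟩ : MonMod X r) ≤ ⟨v, i, 1⟩) ∧
      (u ≤ v ↔ (⟨1, i, u⟩ : MonMod X r) ≤ ⟨1, i, v⟩))
    (F : Fin r → FreeAlg K X) (G : Set (FreeAlg K X × FreeBimod K X r))
    (hG : LabGB F G) (p : FreeAlg K X × FreeBimod K X r) (hp : p ∈ G)
    (hred : TopSRed (G \ {p}) p.1 p.2) :
    LabGB F (G \ {p}) := by
  obtain ⟨hlab, hzero⟩ := hG
  have hlab' : InLab F (G \ {p}) := fun q hq => hlab q hq.1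
  refine ⟨hlab', ?_⟩
  refine topSRed_to_zero hmon F (G \ {p}) hlab' ?_
  intro f α hf0 hf
  obtain ⟨σ, hchain⟩ := hzero f α hf
  refine topSRed_transfer hmod G p hred ?_
  exact chain_top hmon hmod G σ (lmon f) (sigW α) (f, α) hchain (lmon_mem hf0)
    (fun w hw => le_lmon hf0 hw) le_rfl
end

section
/- (Syzygy criterion) Let p^[π] ∈ I^[Σ] and let G^[Σ] be a labelled Gröbner basis of I^[Σ] up to signature s(π). If there exists a syzygy σ ∈ Σ and words a, b with s(π) = a·s(σ)·b, then p^[π] regular s-reduces to zero by G^[Σ]. -/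
open Finsupp

section SyzygyHelpers

open Finsupp

variable {K X : Type*} [Field K] {r : ℕ}

lemma evalS_sub (F : Fin r → FreeAlg K X) (α β : FreeBimod K X r) :
    evalS F (α - β) = evalS F α - evalS F β :=
  Finsupp.sum_sub_index (fun μ c d => sub_smul c d _)

lemma evalS_smul (F : Fin r → FreeAlg K X) (c : K) (α : FreeBimod K X r) :
    evalS F (c • α) = c • evalS F α := by
  have h1 := Finsupp.sum_smul_index' (M := K) (N := FreeAlg K X) (R := K) (g := α) (b := c)
    (h := fun μ d => d • (mon K μ.left * F μ.idx * mon K μ.right))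
    (fun μ => zero_smul K _)
  rw [evalS, evalS, h1, Finsupp.smul_sum]
  exact Finsupp.sum_congr fun μ _ => (mul_smul c _ _)

lemma mon_mul (u v : FreeMonoid X) : mon K (u * v) = mon K u * mon K v := map_mul _ _ _

lemma act_injective (a b : FreeMonoid X) : Function.Injective (act (r := r) a b) := by
  intro μ ν h
  simp only [act, MonMod.mk.injEq] at h
  obtain ⟨h1, h2, h3⟩ := h
  cases μ; cases ν
  simp only [MonMod.mk.injEq]
  exact ⟨mul_left_cancel h1, h2, mul_right_cancel h3⟩

lemma evalS_mapDomain_act (F : Fin r → FreeAlg K X) (a b : FreeMonoid X)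
    (σ : FreeBimod K X r) :
    evalS F (Finsupp.mapDomain (act a b) σ) = mon K a * evalS F σ * mon K b := by
  have h1 := Finsupp.sum_mapDomain_index (M := K) (N := FreeAlg K X) (f := act a b) (s := σ)
    (h := fun μ d => d • (mon K μ.left * F μ.idx * mon K μ.right))
    (fun μ => zero_smul K _) (fun μ c d => add_smul c d _)
  rw [evalS, evalS, h1, Finsupp.sum, Finsupp.sum, Finset.mul_sum, Finset.sum_mul]
  refine Finset.sum_congr rfl fun μ _ => ?_
  simp only [act, mon_mul (K := K), mul_smul_comm, smul_mul_assoc, mul_assoc]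

section OrderHelpers

variable [LinearOrder (MonMod X r)]

lemma le_sigW {α : FreeBimod K X r} {μ : MonMod X r} (h : μ ∈ α.support) :
    (μ : WithBot (MonMod X r)) ≤ sigW α := Finset.le_max h

lemma sigW_lt_iff {α : FreeBimod K X r} {m : MonMod X r} :
    sigW α < (m : WithBot (MonMod X r)) ↔ ∀ μ ∈ α.support, μ < m := by
  constructor
  · intro h μ hμ
    exact_mod_cast lt_of_le_of_lt (le_sigW hμ) h
  · intro h
    rcases α.support.eq_empty_or_nonempty with he | hne
    · rw [sigW, he, Finset.max_empty]
      exact WithBot.bot_lt_coe m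
    · obtain ⟨x, hx⟩ := Finset.max_of_nonempty hne
      rw [sigW, hx]
      exact_mod_cast h x (Finset.mem_of_max hx)

lemma sigW_add_le (α β : FreeBimod K X r) : sigW (α + β) ≤ max (sigW α) (sigW β) :=
  le_trans (Finset.max_mono Finsupp.support_add) (le_of_eq Finset.max_union)

lemma sigW_neg (α : FreeBimod K X r) : sigW (-α) = sigW α := by
  rw [sigW, sigW, Finsupp.support_neg]

lemma sigW_sub_le (α β : FreeBimod K X r) : sigW (α - β) ≤ max (sigW α) (sigW β) := by
  rw [sub_eq_add_neg]
  simpa [sigW_neg] using sigW_add_le α (-β)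

lemma sigW_smul_le (c : K) (α : FreeBimod K X r) : sigW (c • α) ≤ sigW α :=
  Finset.max_mono Finsupp.support_smul

lemma sigW_smul_eq {c : K} (hc : c ≠ 0) (α : FreeBimod K X r) : sigW (c • α) = sigW α := by
  rw [sigW, sigW, Finsupp.support_smul_eq hc]

lemma sigW_add_eq {α β : FreeBimod K X r} (h : sigW α < sigW β) : sigW (α + β) = sigW β := by
  have hne : sigW β ≠ ⊥ := fun hb => by simp [hb] at h
  obtain ⟨m, hm⟩ : ∃ m : MonMod X r, β.support.max = m := by
    rcases β.support.eq_empty_or_nonempty with he | hne2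
    · exact absurd (by simp [sigW, he]) hne
    · exact Finset.max_of_nonempty hne2
  have hsb : sigW β = (m : WithBot (MonMod X r)) := hm
  have hmβ : m ∈ β.support := Finset.mem_of_max hm
  have hαm : α m = 0 := by
    by_contra hc
    have h1 : (m : WithBot (MonMod X r)) ≤ sigW α :=
      le_sigW (Finsupp.mem_support_iff.mpr hc)
    rw [hsb] at h
    exact absurd (lt_of_le_of_lt h1 h) (lt_irrefl _)
  have hmem : m ∈ (α + β).support := by
    rw [Finsupp.mem_support_iff, Finsupp.add_apply, hαm, zero_add]
    exact Finsupp.mem_support_iff.mp hmβ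
  refine le_antisymm (le_trans (sigW_add_le α β) (max_le (le_of_lt h) le_rfl)) ?_
  rw [hsb]
  exact le_sigW hmem

lemma sigW_mapDomain
    (hmod : ∀ (a b : FreeMonoid X) (μ ν : MonMod X r), μ ≤ ν → act a b μ ≤ act a b ν)
    (a b : FreeMonoid X) (α : FreeBimod K X r) :
    sigW (Finsupp.mapDomain (act a b) α) = WithBot.map (act a b) (sigW α) := by
  rw [sigW, sigW, Finsupp.mapDomain_support_of_injective (act_injective a b)]
  rcases α.support.eq_empty_or_nonempty with he | hne
  · simp [he]
  · have himg : (α.support.image (act a b)).Nonempty := hne.image _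
    rw [← Finset.coe_max' himg, ← Finset.coe_max' hne, WithBot.map_coe]
    rw [Finset.max'_image (fun μ ν h => hmod a b μ ν h)]

lemma mapDomain_act_apply (a b : FreeMonoid X) (α : FreeBimod K X r) (μ : MonMod X r) :
    Finsupp.mapDomain (act a b) α (act a b μ) = α μ :=
  Finsupp.mapDomain_apply (act_injective a b) α μ

end OrderHelpers

end SyzygyHelpers


lemma transfer_chain {K X : Type*} [Field K] {r : ℕ}
    [LinearOrder (FreeMonoid X)] [LinearOrder (MonMod X r)]
    (hmod : ∀ (a b : FreeMonoid X) (μ ν : MonMod X r), μ ≤ ν → act a b μ ≤ act a b ν)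
    (G : Set (FreeAlg K X × FreeBimod K X r))
    (sπ : MonMod X r) (δ : FreeBimod K X r)
    (hδ : sigW δ = (sπ : WithBot (MonMod X r)))
    (τ : FreeBimod K X r) :
    ∀ x : FreeAlg K X × FreeBimod K X r,
      Relation.ReflTransGen (SRedStep G) x (0, τ) →
      sigW x.2 < (sπ : WithBot (MonMod X r)) →
      Relation.ReflTransGen (RegSRedStep G) (x.1, x.2 + δ) (0, τ + δ) := by
  intro x h
  induction h using Relation.ReflTransGen.head_induction_on with
  | refl => intro _; exact Relation.ReflTransGen.refl
  | head hstep htail ih =>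
    rename_i u v
    intro hu
    obtain ⟨g, γ, hgG, hg0, a', b', hsupp, hsig, hres⟩ := hstep
    set c' : K := u.1.coeff (a' * lmon g * b') * (lcoeff g)⁻¹ with hc'
    have hsubsig : sigW (c' • Finsupp.mapDomain (act a' b') γ) < (sπ : WithBot (MonMod X r)) := by
      refine lt_of_le_of_lt (le_trans (sigW_smul_le _ _) ?_) hu
      rw [sigW_mapDomain hmod]
      exact hsig
    have hv2 : v.2 = u.2 - c' • Finsupp.mapDomain (act a' b') γ := by
      rw [hres]; rfl
    have hvsig : sigW v.2 < (sπ : WithBot (MonMod X r)) := by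
      rw [hv2]
      exact lt_of_le_of_lt (sigW_sub_le _ _) (max_lt hu hsubsig)
    have hsum : sigW (u.2 + δ) = (sπ : WithBot (MonMod X r)) := by
      rw [sigW_add_eq (by rw [hδ]; exact hu), hδ]
    refine Relation.ReflTransGen.head ?_ (ih hvsig)
    refine ⟨g, γ, hgG, hg0, a', b', hsupp, ?_, ?_⟩
    · rw [hsum]
      exact lt_of_le_of_lt hsig hu
    · have hv1 : v.1 = u.1 - c' • (mon K a' * g * mon K b') := by rw [hres]; rfl
      show (v.1, v.2 + δ) = sredResult u.1 (u.2 + δ) g γ a' b'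
      rw [sredResult, hv1, hv2, ← hc']
      refine Prod.ext rfl ?_
      show u.2 - c' • Finsupp.mapDomain (act a' b') γ + δ
        = u.2 + δ - c' • Finsupp.mapDomain (act a' b') γ
      abel

/-- **Syzygy criterion.** Let `p^[π] ∈ I^[Σ]` and let `G^[Σ]` be a labelled Gröbner
basis of `I^[Σ]` up to signature `s(π)`. If there is a syzygy `σ` and words `a, b`
with `s(π) = a·s(σ)·b`, then `p^[π]` regular s-reduces to zero by `G^[Σ]`. -/
theorem syzygy_criterion {K X : Type*} [Field K] {r : ℕ}
    [LinearOrder (FreeMonoid X)] [WellFoundedLT (FreeMonoid X)]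
    [LinearOrder (MonMod X r)] [WellFoundedLT (MonMod X r)]
    (hmon : ∀ a b u v : FreeMonoid X, u ≤ v → a * u * b ≤ a * v * b)
    (hmod : ∀ (a b : FreeMonoid X) (μ ν : MonMod X r), μ ≤ ν → act a b μ ≤ act a b ν)
    (hcomp : ∀ (u v : FreeMonoid X) (i : Fin r),
      (u ≤ v ↔ (⟨u, i, 1⟩ : MonMod X r) ≤ ⟨v, i, 1⟩) ∧
      (u ≤ v ↔ (⟨1, i, u⟩ : MonMod X r) ≤ ⟨1, i, v⟩))
    (F : Fin r → FreeAlg K X) (G : Set (FreeAlg K X × FreeBimod K X r))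
    (p : FreeAlg K X) (π : FreeBimod K X r) (sπ : MonMod X r)
    (hp : p = evalS F π) (hsπ : sigW π = (sπ : WithBot (MonMod X r)))
    (hGB : LabGBUpTo F G sπ)
    (σ : FreeBimod K X r) (hσ : evalS F σ = 0)
    (sσ : MonMod X r) (hsσ : sigW σ = (sσ : WithBot (MonMod X r)))
    (a b : FreeMonoid X) (hdiv : sπ = act a b sσ) :
    RegSRedToZero G (p, π) := by
  have hπmem : sπ ∈ π.support := Finset.mem_of_max hsπ
  have hσmem : sσ ∈ σ.support := Finset.mem_of_max hsσ
  have hπ0 : π sπ ≠ 0 := Finsupp.mem_support_iff.mp hπmem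
  have hσ0 : σ sσ ≠ 0 := Finsupp.mem_support_iff.mp hσmem
  set c : K := π sπ * (σ sσ)⁻¹ with hcdef
  have hc : c ≠ 0 := mul_ne_zero hπ0 (inv_ne_zero hσ0)
  set δ : FreeBimod K X r := c • Finsupp.mapDomain (act a b) σ with hδdef
  have hδsig : sigW δ = (sπ : WithBot (MonMod X r)) := by
    rw [hδdef, sigW_smul_eq hc, sigW_mapDomain hmod, hsσ, WithBot.map_coe, ← hdiv]
  have hδval : δ sπ = π sπ := by
    have hval : δ (act a b sσ) = π sπ := by
      rw [hδdef, Finsupp.smul_apply, mapDomain_act_apply, smul_eq_mul, hcdef,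
        mul_assoc, inv_mul_cancel₀ hσ0, mul_one]
    conv_lhs => rw [hdiv]
    exact hval
  have hα : sigW (π - δ) < (sπ : WithBot (MonMod X r)) := by
    rw [sigW_lt_iff]
    intro μ hμ
    have hμle : (μ : WithBot (MonMod X r)) ≤ (sπ : WithBot (MonMod X r)) := by
      refine le_trans (le_sigW hμ) ?_
      refine le_trans (sigW_sub_le π δ) ?_
      rw [hsπ, hδsig, max_self]
    have hne : μ ≠ sπ := by
      intro he
      subst he
      exact Finsupp.mem_support_iff.mp hμ (by rw [Finsupp.sub_apply, hδval, sub_self])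
    exact lt_of_le_of_ne (by exact_mod_cast hμle) hne
  have hpα : p = evalS F (π - δ) := by
    rw [evalS_sub]
    have hz : evalS F δ = 0 := by
      rw [hδdef, evalS_smul, evalS_mapDomain_act, hσ, mul_zero, zero_mul, smul_zero]
    rw [hz, sub_zero, hp]
  obtain ⟨τ, hchain⟩ := hGB.2 p (π - δ) hpα hα
  have hmain := transfer_chain hmod G sπ δ hδsig τ (p, π - δ) hchain hα
  rw [sub_add_cancel] at hmain
  exact ⟨τ + δ, hmain⟩
end
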